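/- Let K₀ be a valued field of characteristic p > 0 with valuation v, and a ∈ K₀ with va < 0 and va not divisible by p in vK₀. Let ϑ be a root of X^p - X - a. Then [K₀(ϑ) : K₀] = p, v extends uniquely to K₀(ϑ), vϑ = va/p, (vK₀(ϑ) : vK₀) = p, and K₀(ϑ)v = K₀v. -/

import Mathlib

open Finset Polynomial

noncomputable local instance (priority := low) instOrderBotAS {Γ : Type*}
    [LinearOrderedCommGroupWithZero Γ] : OrderBot Γ :=
  { bot := 0, bot_le := fun _ => zero_le' }

private lemma pow_le_one_iff_AS {Γ : Type*} [LinearOrderedCommGroupWithZero Γ] {y : Γ} {n : ℕ}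
    (hn : n ≠ 0) : y ^ n ≤ 1 ↔ y ≤ 1 := by
  constructor
  · contrapose!
    exact fun h => one_lt_pow' h hn
  · exact fun h => pow_le_one' h n

private lemma val_sum_eq_sup_AS {L Γ : Type*} [Field L] [LinearOrderedCommGroupWithZero Γ]
    (u : Valuation L Γ) {ι : Type*} (s : Finset ι) (f : ι → L)
    (h : ∀ i ∈ s, ∀ j ∈ s, i ≠ j → u (f i) = u (f j) → u (f i) = 0) :
    u (∑ i ∈ s, f i) = s.sup fun i => u (f i) := by
  classical
  induction s using Finset.induction_on with
  | empty => simp; exact le_antisymm zero_le' bot_le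
  | @insert a s ha ih =>
    have h' : ∀ i ∈ s, ∀ j ∈ s, i ≠ j → u (f i) = u (f j) → u (f i) = 0 :=
      fun i hi j hj => h i (mem_insert_of_mem hi) j (mem_insert_of_mem hj)
    have ihs := ih h'
    rw [Finset.sum_insert ha, Finset.sup_insert]
    by_cases hne : u (f a) = u (∑ i ∈ s, f i)
    · have h0 : u (f a) = 0 := by
        by_contra h0
        have hs0 : (s.sup fun i => u (f i)) ≠ 0 := by rw [← ihs, ← hne]; exact h0
        have hsne : s.Nonempty := by
          rcases s.eq_empty_or_nonempty with rfl | hs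
          · exact (hs0 (by rw [Finset.sup_empty]; exact le_antisymm bot_le zero_le')).elim
          · exact hs
        obtain ⟨j, hj, hjs⟩ := Finset.exists_mem_eq_sup s hsne (fun i => u (f i))
        have hja : a ≠ j := fun he => ha (he ▸ hj)
        have : u (f a) = u (f j) := by rw [hne, ihs, hjs]
        exact h0 (h a (mem_insert_self a s) j (mem_insert_of_mem hj) hja this)
      have hfa : f a = 0 := u.zero_iff.mp h0
      rw [hfa, zero_add, ihs, map_zero, max_eq_right zero_le']
    · rw [Valuation.map_add_of_distinct_val u hne, ihs]

private lemma AS_core {K₀ L : Type*} [Field K₀] [Field L] [Algebra K₀ L]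
    {Γ : Type*} [LinearOrderedCommGroupWithZero Γ] {p : ℕ} (hp : p.Prime)
    (u : Valuation L Γ) (a : K₀)
    (hua : 1 < u (algebraMap K₀ L a))
    (hund : ¬ ∃ c : K₀, c ≠ 0 ∧ u (algebraMap K₀ L c) ^ p = u (algebraMap K₀ L a))
    (ϑ : L) (hϑ : ϑ ^ p - ϑ = algebraMap K₀ L a) :
    1 < u ϑ ∧ u ϑ ^ p = u (algebraMap K₀ L a) ∧
    (∀ k : ℕ, 0 < k → k < p → ∀ c : K₀, c ≠ 0 → u (algebraMap K₀ L c) ≠ u ϑ ^ k) ∧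
    (∀ c : ℕ → K₀, ∀ i ∈ Finset.range p, ∀ j ∈ Finset.range p, i ≠ j →
       u (algebraMap K₀ L (c i) * ϑ ^ i) = u (algebraMap K₀ L (c j) * ϑ ^ j) →
       u (algebraMap K₀ L (c i) * ϑ ^ i) = 0) := by
  set f := algebraMap K₀ L with hf
  have ha0 : a ≠ 0 := by
    intro h
    rw [h, map_zero, map_zero] at hua
    exact absurd hua (not_lt.mpr zero_le')
  -- step 1 : 1 < u ϑ
  have h1 : 1 < u ϑ := by
    by_contra h
    push_neg at h
    have hle : u (ϑ ^ p - ϑ) ≤ 1 :=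
      Valuation.map_sub_le _ (by rw [map_pow]; exact pow_le_one' h p) h
    rw [hϑ] at hle
    exact absurd hua (not_lt.mpr hle)
  have hθz : u ϑ ≠ 0 := (zero_lt_one.trans h1).ne'
  -- step 2 : u ϑ ^ p = u a
  have h2 : u ϑ ^ p = u (f a) := by
    have hlt : u ϑ < u (ϑ ^ p) := by
      rw [map_pow]
      calc u ϑ = u ϑ ^ 1 := (pow_one _).symm
        _ < u ϑ ^ p := pow_lt_pow_right₀ h1 hp.one_lt
    have := Valuation.map_sub_eq_of_lt_left u hlt
    rw [hϑ, map_pow] at this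
    exact this.symm
  -- step 3
  have h3 : ∀ k : ℕ, 0 < k → k < p → ∀ c : K₀, c ≠ 0 → u (f c) ≠ u ϑ ^ k := by
    intro k hk0 hkp c hc heq
    have hkcop : Nat.Coprime k p :=
      ((hp.coprime_iff_not_dvd).mpr (fun hdvd =>
        absurd (Nat.le_of_dvd hk0 hdvd) (not_le.mpr hkp))).symm
    have hco : IsCoprime (k : ℤ) (p : ℤ) := by
      rw [Int.isCoprime_iff_gcd_eq_one, Int.gcd_natCast_natCast]
      exact hkcop
    obtain ⟨m, n, hmn⟩ := hco
    set c' : K₀ := c ^ m * a ^ n with hc'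
    have hc'0 : c' ≠ 0 := mul_ne_zero (zpow_ne_zero _ hc) (zpow_ne_zero _ ha0)
    have e1 : u (f c') = u (f c) ^ m * u (f a) ^ n := by
      rw [hc', map_mul, map_mul, map_zpow₀, map_zpow₀, map_zpow₀, map_zpow₀]
    have e2 : u (f c') = u ϑ := by
      rw [e1, heq, ← h2, ← zpow_natCast (u ϑ) k, ← zpow_natCast (u ϑ) p,
        ← zpow_mul, ← zpow_mul, ← zpow_add₀ hθz]
      rw [show (k : ℤ) * m + (p : ℤ) * n = 1 by linarith [hmn]]
      exact zpow_one _
    exact hund ⟨c', hc'0, by rw [e2, h2]⟩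
  refine ⟨h1, h2, h3, ?_⟩
  -- step 4 : distinct values
  have aux : ∀ i j : ℕ, ∀ ci cj : K₀, i < j → j < p → ci ≠ 0 → cj ≠ 0 →
      u (f ci * ϑ ^ i) ≠ u (f cj * ϑ ^ j) := by
    intro i j ci cj hij hjp hci hcj heq
    rw [map_mul, map_mul, map_pow, map_pow] at heq
    have hsplit : u ϑ ^ j = u ϑ ^ (j - i) * u ϑ ^ i := by
      rw [← pow_add, Nat.sub_add_cancel hij.le]
    rw [hsplit, ← mul_assoc] at heq
    have hcan : u (f ci) = u (f cj) * u ϑ ^ (j - i) :=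
      mul_right_cancel₀ (pow_ne_zero _ hθz) heq
    have hcjz : u (f cj) ≠ 0 := (u.ne_zero_iff).mpr ((map_ne_zero f).mpr hcj)
    have hdiv : u (f (ci / cj)) = u ϑ ^ (j - i) := by
      rw [map_div₀, map_div₀, hcan, mul_comm, mul_div_assoc, div_self hcjz, mul_one]
    exact h3 (j - i) (by omega) (by omega) (ci / cj) (div_ne_zero hci hcj) hdiv
  intro c i hi j hj hij heq
  by_contra h0
  have hci : c i ≠ 0 := by
    intro h; rw [h] at h0; simp at h0
  have hcj : c j ≠ 0 := by
    intro h; rw [heq, h] at h0; simp at h0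
  rcases hij.lt_or_gt with h | h
  · exact aux i j (c i) (c j) h (mem_range.mp hj) hci hcj heq
  · exact aux j i (c j) (c i) h (mem_range.mp hi) hcj hci heq.symm

/-- Let `(K₀,v)` be a valued field of characteristic `p > 0` and
`a ∈ K₀` with `va < 0` not divisible by `p` in `vK₀`.  Let `ϑ` be a root of
`X^p - X - a` (in a field `L = K₀(ϑ)`).  Then `[K₀(ϑ) : K₀] = p`, `v` extends
uniquely to `K₀(ϑ)`, `vϑ = va/p`, `(vK₀(ϑ) : vK₀) = p`, and `K₀(ϑ)v = K₀v`.

Multiplicative convention: additive `va < 0` reads `1 < v a`; additive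
`vϑ = va/p` reads `(v ϑ)^p = v a`. -/
theorem artin_schreier_root_negative_value
    {K₀ L : Type*} [Field K₀] [Field L] [Algebra K₀ L]
    {p : ℕ} (hp : p.Prime) [CharP K₀ p]
    {Γ : Type*} [LinearOrderedCommGroupWithZero Γ] (v : Valuation L Γ)
    (a : K₀)
    -- additive `va < 0`
    (hva : 1 < v (algebraMap K₀ L a))
    -- `va` is not divisible by `p` in `vK₀`
    (hnd : ¬ ∃ c : K₀, c ≠ 0 ∧ (v (algebraMap K₀ L c)) ^ p = v (algebraMap K₀ L a))
    (ϑ : L) (hϑ : ϑ ^ p - ϑ = algebraMap K₀ L a)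
    (hgen : Algebra.adjoin K₀ {ϑ} = ⊤) :
    -- `[K₀(ϑ) : K₀] = p`
    Module.finrank K₀ L = p ∧
    -- the valuation extends uniquely from `K₀` to `K₀(ϑ)`
    (∀ (Γ' : Type) [LinearOrderedCommGroupWithZero Γ'] (w : Valuation L Γ'),
        (w.comap (algebraMap K₀ L)).IsEquiv (v.comap (algebraMap K₀ L)) → w.IsEquiv v) ∧
    -- `vϑ = va/p`
    (v ϑ) ^ p = v (algebraMap K₀ L a) ∧
    -- `(vK₀(ϑ) : vK₀) = p`: `vϑ ∉ vK₀` and `vL = vK₀ + {0,…,p-1}·vϑ`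
    (¬ ∃ c : K₀, c ≠ 0 ∧ v (algebraMap K₀ L c) = v ϑ) ∧
    (∀ x : L, x ≠ 0 → ∃ c : K₀, ∃ i : ℕ, i < p ∧
        v x = v (algebraMap K₀ L c) * (v ϑ) ^ i) ∧
    -- `K₀(ϑ)v = K₀v`
    (∀ x : L, v x ≤ 1 → ∃ c : K₀, v (x - algebraMap K₀ L c) < 1) := by
  classical
  obtain ⟨h1, h2, h3, h4⟩ := AS_core hp v a hva hnd ϑ hϑ
  set f := algebraMap K₀ L with hfdef
  have hp0 : p ≠ 0 := hp.ne_zero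
  have hp1 : 1 < p := hp.one_lt
  have hθ0 : ϑ ≠ 0 := by
    intro h
    rw [h, map_zero] at h1
    exact absurd h1 (not_lt.mpr zero_le')
  have ha0 : a ≠ 0 := by
    intro h
    rw [h, map_zero, map_zero] at hva
    exact absurd hva (not_lt.mpr zero_le')
  -- the polynomial
  set q : K₀[X] := X ^ p - X - C a with hq
  have hqe : q = X ^ (p - 1 + 1) - (X + C a) := by
    rw [Nat.sub_add_cancel hp.one_le]
    ring
  have hqm : q.Monic := by
    rw [hqe]
    apply monic_X_pow_sub
    rw [degree_X_add_C]
    exact_mod_cast (by omega : 1 < p - 1 + 1)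
  have haev : aeval ϑ q = 0 := by
    rw [hq]
    simp only [map_sub, aeval_X_pow, aeval_X, aeval_C]
    rw [sub_eq_zero, hϑ]
  have hint : IsIntegral K₀ ϑ := ⟨q, hqm, by rwa [← aeval_def]⟩
  have hqdeg : q.natDegree = p := by
    rw [hq, sub_sub]
    rw [natDegree_sub_eq_left_of_natDegree_lt]
    · exact natDegree_X_pow p
    · rw [natDegree_X_pow]
      exact lt_of_le_of_lt (natDegree_add_le _ _)
        (by simp [natDegree_X, natDegree_C]; omega)
  have hmdeg : (minpoly K₀ ϑ).natDegree ≤ p := by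
    rw [← hqdeg]
    exact natDegree_le_of_dvd (minpoly.dvd K₀ ϑ haev) hqm.ne_zero
  -- power basis
  set pb : PowerBasis K₀ L := (Algebra.adjoin.powerBasis hint).map
    ((Subalgebra.equivOfEq _ _ hgen).trans Subalgebra.topEquiv) with hpb
  have hpbgen : pb.gen = ϑ := rfl
  have hpbdim : pb.dim = (minpoly K₀ ϑ).natDegree := rfl
  have hfr : Module.finrank K₀ L = pb.dim := pb.finrank
  haveI hfin : Module.Finite K₀ L := pb.finite
  -- representation
  have hrep : ∀ x : L, ∃ c : ℕ → K₀, x = ∑ i ∈ Finset.range p, f (c i) * ϑ ^ i := by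
    intro x
    set c : ℕ → K₀ := fun n => if h : n < pb.dim then pb.basis.repr x ⟨n, h⟩ else 0 with hc
    refine ⟨c, ?_⟩
    have hx : x = ∑ i : Fin pb.dim, pb.basis.repr x i • ϑ ^ (i : ℕ) := by
      conv_lhs => rw [← pb.basis.sum_repr x]
      refine Finset.sum_congr rfl fun i _ => ?_
      rw [pb.coe_basis, hpbgen]
    have hterm : ∀ i : Fin pb.dim, pb.basis.repr x i • ϑ ^ (i : ℕ) = f (c i) * ϑ ^ (i : ℕ) := by
      intro i
      rw [Algebra.smul_def, hc]
      simp only [dif_pos i.isLt, Fin.eta]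
      rfl
    rw [hx, Finset.sum_congr rfl fun i _ => hterm i]
    rw [Fin.sum_univ_eq_sum_range (fun n => f (c n) * ϑ ^ n) pb.dim]
    refine Finset.sum_subset (Finset.range_subset_range.mpr (hpbdim ▸ hmdeg)) ?_
    intro n _ hn
    rw [mem_range, not_lt] at hn
    rw [hc]
    simp [dif_neg (not_lt.mpr hn)]
  -- linear independence and dimension
  have hdimp : pb.dim = p := by
    refine le_antisymm (hpbdim ▸ hmdeg) ?_
    have hli : LinearIndependent K₀ fun i : Fin p => ϑ ^ (i : ℕ) := by
      rw [Fintype.linearIndependent_iff]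
      intro g hg i
      set c : ℕ → K₀ := fun n => if h : n < p then g ⟨n, h⟩ else 0 with hc
      have hsum : ∑ n ∈ Finset.range p, f (c n) * ϑ ^ n = 0 := by
        rw [← hg, ← Fin.sum_univ_eq_sum_range (fun n => f (c n) * ϑ ^ n) p]
        refine Finset.sum_congr rfl fun j _ => ?_
        rw [Algebra.smul_def, hc]
        simp only [dif_pos j.isLt, Fin.eta]
        rfl
      have hsup := val_sum_eq_sup_AS v (Finset.range p) (fun n => f (c n) * ϑ ^ n) (h4 c)
      rw [hsum, map_zero] at hsup
      have hi0 : v (f (c i) * ϑ ^ (i : ℕ)) = 0 := by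
        have := Finset.le_sup (f := fun n => v (f (c n) * ϑ ^ n))
          (mem_range.mpr i.isLt)
        rw [← hsup] at this
        exact le_antisymm this zero_le'
      have : f (c i) * ϑ ^ (i : ℕ) = 0 := v.zero_iff.mp hi0
      have : f (c i) = 0 := by
        rcases mul_eq_zero.mp this with h | h
        · exact h
        · exact absurd h (pow_ne_zero _ hθ0)
      have hci : c i = 0 := (_root_.map_eq_zero f).mp this
      rw [hc] at hci
      simpa [dif_pos i.isLt] using hci
    have := hli.fintype_card_le_finrank
    simpa [hfr] using this
  have hfinrank : Module.finrank K₀ L = p := hfr.trans hdimp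
  refine ⟨hfinrank, ?_, h2, ?_, ?_, ?_⟩
  · -- uniqueness of extension
    intro Γ' _ w hw
    have hcomp : ∀ b d : K₀, w (f b) ≤ w (f d) ↔ v (f b) ≤ v (f d) := fun b d => hw b d
    have hle1 : ∀ b : K₀, w (f b) ≤ 1 ↔ v (f b) ≤ 1 := by
      intro b
      have := hcomp b 1
      simpa using this
    have heq1 : ∀ b : K₀, b ≠ 0 → w (f b) = 1 → v (f b) = 1 := by
      intro b hb h
      have hb1 : v (f b) ≤ 1 := (hle1 b).mp h.le
      have hb2 : w (f b⁻¹) ≤ 1 := by rw [map_inv₀, map_inv₀, h, inv_one]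
      have hb3 : v (f b⁻¹) ≤ 1 := (hle1 b⁻¹).mp hb2
      rw [map_inv₀, map_inv₀] at hb3
      have hbz : (0 : Γ) < v (f b) := zero_lt_iff.mpr (v.ne_zero_iff.mpr (by
        simp [hfdef, hb]))
      exact le_antisymm hb1 ((inv_le_one₀ hbz).mp hb3)
    have hwa : 1 < w (f a) := by
      by_contra h
      push_neg at h
      exact absurd ((hle1 a).mp h) (not_le.mpr hva)
    have hwnd : ¬ ∃ c : K₀, c ≠ 0 ∧ w (f c) ^ p = w (f a) := by
      rintro ⟨c, hc, hcp⟩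
      apply hnd
      refine ⟨c, hc, ?_⟩
      have hwaz : w (f a) ≠ 0 := (zero_lt_one.trans hwa).ne'
      have hb : w (f (c ^ p / a)) = 1 := by
        rw [map_div₀, map_pow, map_div₀, map_pow, hcp, div_self hwaz]
      have hv1 : v (f (c ^ p / a)) = 1 :=
        heq1 _ (div_ne_zero (pow_ne_zero _ hc) ha0) hb
      rw [map_div₀, map_pow, map_div₀, map_pow] at hv1
      have hvaz : v (f a) ≠ 0 := (zero_lt_one.trans hva).ne'
      field_simp at hv1
      exact hv1
    obtain ⟨hw1, hw2, hw3, hw4⟩ := AS_core hp w a hwa hwnd ϑ hϑ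
    rw [← hfdef] at hw2 hw3 hw4
    refine Valuation.isEquiv_of_val_le_one ?_
    intro x
    by_cases hx : x = 0
    · simp [hx]
    obtain ⟨c, hcx⟩ := hrep x
    have hsv := val_sum_eq_sup_AS v (Finset.range p) (fun n => f (c n) * ϑ ^ n) (h4 c)
    have hsw := val_sum_eq_sup_AS w (Finset.range p) (fun n => f (c n) * ϑ ^ n) (hw4 c)
    rw [← hcx] at hsv hsw
    have hterm : ∀ i ∈ Finset.range p,
        (w (f (c i) * ϑ ^ i) ≤ 1 ↔ v (f (c i) * ϑ ^ i) ≤ 1) := by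
      intro i _
      by_cases hci : c i = 0
      · simp [hci, zero_le']
      · have keyv : (v (f (c i) * ϑ ^ i)) ^ p = v (f (c i ^ p * a ^ i)) := by
          simp only [map_mul, map_pow]
          rw [mul_pow, ← pow_mul, mul_comm i p, pow_mul, h2]
        have keyw : (w (f (c i) * ϑ ^ i)) ^ p = w (f (c i ^ p * a ^ i)) := by
          simp only [map_mul, map_pow]
          rw [mul_pow, ← pow_mul, mul_comm i p, pow_mul, hw2]
        rw [← pow_le_one_iff_AS hp0 (y := w (f (c i) * ϑ ^ i)),
          ← pow_le_one_iff_AS hp0 (y := v (f (c i) * ϑ ^ i)), keyv, keyw]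
        exact hle1 _
    rw [hsv, hsw, Finset.sup_le_iff, Finset.sup_le_iff]
    exact ⟨fun H i hi => (hterm i hi).mp (H i hi), fun H i hi => (hterm i hi).mpr (H i hi)⟩
  · -- v ϑ not in v K₀
    rintro ⟨c, hc, hceq⟩
    exact hnd ⟨c, hc, by rw [hceq, h2]⟩
  · -- value group representation
    intro x hx
    obtain ⟨c, hcx⟩ := hrep x
    have hsum := val_sum_eq_sup_AS v (Finset.range p) (fun n => f (c n) * ϑ ^ n) (h4 c)
    rw [← hcx] at hsum
    have hne : (Finset.range p).Nonempty := Finset.nonempty_range_iff.mpr hp0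
    obtain ⟨j, hj, hjs⟩ := Finset.exists_mem_eq_sup _ hne (fun n => v (f (c n) * ϑ ^ n))
    exact ⟨c j, j, mem_range.mp hj, by rw [hsum, hjs, map_mul, map_pow]⟩
  · -- residue field
    intro x hx1
    obtain ⟨c, hcx⟩ := hrep x
    refine ⟨c 0, ?_⟩
    have hsum := val_sum_eq_sup_AS v (Finset.range p) (fun n => f (c n) * ϑ ^ n) (h4 c)
    rw [← hcx] at hsum
    have hterm : ∀ i ∈ Finset.range p, i ≠ 0 → v (f (c i) * ϑ ^ i) < 1 := by
      intro i hi hi0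
      have hle : v (f (c i) * ϑ ^ i) ≤ 1 := by
        refine le_trans ?_ hx1
        rw [hsum]
        exact Finset.le_sup (f := fun n => v (f (c n) * ϑ ^ n)) hi
      refine lt_of_le_of_ne hle ?_
      intro heq
      have hci : c i ≠ 0 := by
        intro h
        rw [h] at heq
        simp at heq
      have hinv : v (f (c i)⁻¹) = v ϑ ^ i := by
        rw [map_inv₀, map_inv₀]
        rw [map_mul, map_pow] at heq
        exact inv_eq_of_mul_eq_one_right heq
      exact h3 i (Nat.pos_of_ne_zero hi0) (mem_range.mp hi) (c i)⁻¹ (inv_ne_zero hci) hinv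
    have hx0 : x - f (c 0) = ∑ i ∈ (Finset.range p).erase 0, f (c i) * ϑ ^ i := by
      rw [hcx, ← Finset.add_sum_erase (Finset.range p) (fun n => f (c n) * ϑ ^ n)
        (mem_range.mpr hp.pos)]
      rw [pow_zero, mul_one]
      ring
    rw [hx0]
    refine Valuation.map_sum_lt v one_ne_zero ?_
    intro i hi
    exact hterm i (Finset.mem_of_mem_erase hi) (Finset.ne_of_mem_erase hi)
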